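/- Let G be a simple graph with distinct vertices s, t at distance d, such that every vertex of G lies on some shortest s-t path and no edge of G joins two vertices in the same layer. Let G' be obtained from G by adding four new vertices s_1, s_2, t_1, t_2 and four new edges s_2s_1, s_1s, tt_1, t_1t_2. Let V_s and V_t be vertex sets of shortest s-t paths in G, and let V'_s = V_s ∪ {s_1, s_2, t_1, t_2} and V'_t = V_t ∪ {s_1, s_2, t_1, t_2}. Then there is a sequence of TJ steps transforming V_s into V_t in which every intermediate vertex subset is the vertex set of a shortest s-t path in G, if and only if there is a sequence of TJ steps transforming V'_s into V'_t in which every intermediate vertex subset induces a path in G'. -/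

import Mathlib

namespace Stmt16

/-- The vertex type of `G'`: the vertices of `G` plus four new vertices;
`Sum.inr 0 = s_1`, `Sum.inr 1 = s_2`, `Sum.inr 2 = t_1`, `Sum.inr 3 = t_2`. -/
abbrev Wt (V : Type*) := V ⊕ Fin 4

variable {V : Type*}

/-- `v` lies on some shortest `s`-`t` path of `G`. -/
def OnShortest (G : SimpleGraph V) (s t v : V) : Prop :=
  G.dist s v + G.dist v t = G.dist s t

/-- The graph `G'`, obtained from `G` by adding the new vertices `s_1, s_2, t_1, t_2`
and the new edges `s_2s_1`, `s_1s`, `tt_1`, `t_1t_2`. -/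
def newG (G : SimpleGraph V) (s t : V) : SimpleGraph (Wt V) :=
  SimpleGraph.fromEdgeSet
    (Sym2.map Sum.inl '' G.edgeSet ∪
      {s(Sum.inr 1, Sum.inr 0), s(Sum.inr 0, Sum.inl s),
       s(Sum.inl t, Sum.inr 2), s(Sum.inr 2, Sum.inr 3)})

/-- `U` is the vertex set of a shortest `s`-`t` path of `G`. -/
def ShortestPathSet (G : SimpleGraph V) (s t : V) (U : Set V) : Prop :=
  ∃ p : G.Walk s t, p.IsPath ∧ p.length = G.dist s t ∧ U = {v | v ∈ p.support}

/-- A graph is a (simple) path: a tree with exactly two vertices of degree one in which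
every other vertex has degree two. -/
def IsPathGraph {α : Type*} (H : SimpleGraph α) : Prop :=
  H.Connected ∧ H.IsAcyclic ∧
    {v | (H.neighborSet v).ncard = 1}.ncard = 2 ∧
    ∀ v, (H.neighborSet v).ncard = 1 ∨ (H.neighborSet v).ncard = 2

/-- A single token-jumping (TJ) step on vertex subsets. -/
def TJStepV {α : Type*} (V1 V2 : Set α) : Prop :=
  ∃ u v, u ∈ V1 ∧ v ∉ V1 ∧ V2 = (V1 \ {u}) ∪ {v}

/-- There is a sequence of TJ steps from `Ws` to `Wt` in which every vertex subset
satisfies the property `P`. -/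
def TJReachV {α : Type*} (P : Set α → Prop) (Ws Wt : Set α) : Prop :=
  ∃ (l : ℕ) (f : ℕ → Set α), f 0 = Ws ∧ f l = Wt ∧
    (∀ k ≤ l, P (f k)) ∧ ∀ k < l, TJStepV (f k) (f (k + 1))


open Sum SimpleGraph

section Aux
variable {G : SimpleGraph V} {s t : V}


variable {G : SimpleGraph V} {s t : V}

lemma adj_inl_inl {u v : V} : (newG G s t).Adj (inl u) (inl v) ↔ G.Adj u v := by
  simp only [newG, SimpleGraph.fromEdgeSet_adj, Set.mem_union, Set.mem_image,
    Set.mem_insert_iff, Set.mem_singleton_iff]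
  constructor
  · rintro ⟨h | h, hne⟩
    · obtain ⟨e, he, hmap⟩ := h
      induction e with
      | h x y =>
        simp only [Sym2.map_pair_eq, Sym2.eq, Sym2.rel_iff'] at hmap
        rcases hmap with ⟨rfl, rfl⟩ | ⟨rfl, rfl⟩
        · exact (SimpleGraph.mem_edgeSet G).mp he
        · exact ((SimpleGraph.mem_edgeSet G).mp he).symm
    · simp_all [Sym2.eq, Sym2.rel_iff']
  · intro h
    refine ⟨Or.inl ⟨s(u, v), (SimpleGraph.mem_edgeSet G).mpr h, by simp⟩, by simp [h.ne]⟩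

lemma adj_inl_inr {u : V} {i : Fin 4} :
    (newG G s t).Adj (inl u) (inr i) ↔ (u = s ∧ i = 0) ∨ (u = t ∧ i = 2) := by
  simp only [newG, SimpleGraph.fromEdgeSet_adj, Set.mem_union, Set.mem_image,
    Set.mem_insert_iff, Set.mem_singleton_iff]
  constructor
  · rintro ⟨h | h, hne⟩
    · obtain ⟨e, he, hmap⟩ := h
      induction e with
      | h x y => simp [Sym2.map_pair_eq, Sym2.eq, Sym2.rel_iff'] at hmap
    · simp_all [Sym2.eq, Sym2.rel_iff']
  · rintro (⟨rfl, rfl⟩ | ⟨rfl, rfl⟩) <;> simp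

lemma adj_inr_inr {i j : Fin 4} :
    (newG G s t).Adj (inr i) (inr j) ↔
      (i = 0 ∧ j = 1) ∨ (i = 1 ∧ j = 0) ∨ (i = 2 ∧ j = 3) ∨ (i = 3 ∧ j = 2) := by
  simp only [newG, SimpleGraph.fromEdgeSet_adj, Set.mem_union, Set.mem_image,
    Set.mem_insert_iff, Set.mem_singleton_iff]
  constructor
  · rintro ⟨h | h, hne⟩
    · obtain ⟨e, he, hmap⟩ := h
      induction e with
      | h x y => simp [Sym2.map_pair_eq, Sym2.eq, Sym2.rel_iff'] at hmap
    · simp_all [Sym2.eq, Sym2.rel_iff']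
      omega
  · rintro (⟨rfl, rfl⟩ | ⟨rfl, rfl⟩ | ⟨rfl, rfl⟩ | ⟨rfl, rfl⟩) <;> simp <;> decide


end Aux

section WalkAux
variable {α : Type*} {H : SimpleGraph α}


lemma exists_walk_take {a b : α} (p : H.Walk a b) (i : ℕ) (hi : i ≤ p.length) :
    ∃ q : H.Walk a (p.getVert i), q.length = i := by
  induction p generalizing i with
  | nil =>
    simp only [Walk.length_nil, Nat.le_zero] at hi
    subst hi; exact ⟨.nil, rfl⟩
  | @cons u v w h p ih =>
    cases i with
    | zero => exact ⟨.nil, rfl⟩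
    | succ j =>
      obtain ⟨q, hq⟩ := ih j (by simpa using hi)
      exact ⟨.cons h q, by simp [hq]⟩

lemma exists_walk_drop {a b : α} (p : H.Walk a b) (i : ℕ) (hi : i ≤ p.length) :
    ∃ q : H.Walk (p.getVert i) b, q.length = p.length - i := by
  induction p generalizing i with
  | nil =>
    simp only [Walk.length_nil, Nat.le_zero] at hi
    subst hi; exact ⟨.nil, rfl⟩
  | @cons u v w h p ih =>
    cases i with
    | zero => exact ⟨.cons h p, by simp; rfl⟩
    | succ j =>
      obtain ⟨q, hq⟩ := ih j (by simpa using hi)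
      exact ⟨q, by simpa using hq⟩

lemma dist_getVert {a b : α} (p : H.Walk a b) (hp : p.length = H.dist a b)
    (i : ℕ) (hi : i ≤ p.length) : H.dist a (p.getVert i) = i := by
  obtain ⟨q, hq⟩ := exists_walk_take p i hi
  obtain ⟨r, hr⟩ := exists_walk_drop p i hi
  have h1 : H.dist a (p.getVert i) ≤ i := by simpa [hq] using SimpleGraph.dist_le q
  obtain ⟨q', hq'⟩ := (q.reachable).exists_walk_length_eq_dist
  have h2 := SimpleGraph.dist_le (q'.append r)
  rw [Walk.length_append, hq', hr, ← hp] at h2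
  omega

lemma dist_le_succ_of_adj {a u v : α} (h : H.Adj u v) (hr : H.Reachable a u) :
    H.dist a v ≤ H.dist a u + 1 := by
  obtain ⟨q', hq'⟩ := hr.exists_walk_length_eq_dist
  have := SimpleGraph.dist_le (q'.concat h)
  rwa [Walk.length_concat, hq'] at this


lemma two_nbrs {α : Type*} {H : SimpleGraph α} {a c : α} {P : H.Walk a c} (hP : P.IsPath)
    {b : α} (hb : b ∈ P.support) (hba : b ≠ a) (hbc : b ≠ c) :
    ∃ y z, y ≠ z ∧ H.Adj b y ∧ H.Adj b z ∧ y ∈ P.support ∧ z ∈ P.support := by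
  classical
  have hspec := P.take_spec hb
  set q1 := P.takeUntil b hb with hq1def
  set q2 := P.dropUntil b hb with hq2def
  have hq2nil : ¬ q2.Nil := by
    intro h
    exact hbc (Walk.Nil.eq h)
  have hq1nil : ¬ q1.reverse.Nil := by
    intro h
    exact hba (Walk.Nil.eq h)
  obtain ⟨y, hby, r2, hr2⟩ := Walk.not_nil_iff.mp hq2nil
  obtain ⟨z, hbz, r1, hr1⟩ := Walk.not_nil_iff.mp hq1nil
  have hysup : y ∈ q2.support.tail := by
    rw [hr2]; simp only [Walk.support_cons, List.tail_cons]
    exact Walk.start_mem_support r2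
  have hzsup : z ∈ q1.support := by
    have : z ∈ q1.reverse.support := by
      rw [hr1]; simp only [Walk.support_cons]
      exact List.mem_cons_of_mem _ (Walk.start_mem_support r1)
    rwa [Walk.support_reverse, List.mem_reverse] at this
  have hnd : (q1.support ++ q2.support.tail).Nodup := by
    have := hP.support_nodup
    rwa [← hspec, Walk.support_append] at this
  have hyz : y ≠ z := by
    rintro rfl
    exact (List.disjoint_of_nodup_append hnd) hzsup hysup
  refine ⟨y, z, hyz, hby, hbz, ?_, ?_⟩
  · rw [← hspec, Walk.support_append, List.mem_append]
    exact Or.inr hysup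
  · rw [← hspec, Walk.support_append, List.mem_append]
    exact Or.inl hzsup

lemma mem_of_reachable_closed {α : Type*} {H : SimpleGraph α} {S : Set α}
    (hS : ∀ a ∈ S, ∀ b, H.Adj a b → b ∈ S) {x y : α} (hx : x ∈ S) (h : H.Reachable x y) :
    y ∈ S := by
  obtain ⟨w⟩ := h
  induction w with
  | nil => exact hx
  | cons h p ih => exact ih (hS _ hx _ h)

lemma ncard_mem_list {β : Type*} [DecidableEq β] {l : List β} (h : l.Nodup) :
    {x | x ∈ l}.ncard = l.length := by
  rw [show {x | x ∈ l} = ↑l.toFinset from by ext x; simp]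
  rw [Set.ncard_coe_finset, List.toFinset_card_of_nodup h]

end WalkAux

section PathGraph


lemma isPathGraph_of_equiv {α : Type*} (H : SimpleGraph α) (n : ℕ) (hn : 2 ≤ n)
    (e : α ≃ Fin n)
    (hadj : ∀ a b, H.Adj a b ↔ ((e a).val + 1 = (e b).val ∨ (e b).val + 1 = (e a).val)) :
    IsPathGraph H := by
  haveI : DecidableEq α := e.decidableEq
  have h0 : (0 : ℕ) < n := by omega
  have h1 : (1 : ℕ) < n := by omega
  have hnbr_mid : ∀ (k : ℕ) (hk0 : 0 < k) (hk1 : k + 1 < n) (a : α), (e a).val = k →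
      H.neighborSet a = {e.symm ⟨k - 1, by omega⟩, e.symm ⟨k + 1, hk1⟩} := by
    intro k hk0 hk1 a hka
    subst hka
    ext b
    simp only [mem_neighborSet, Set.mem_insert_iff, Set.mem_singleton_iff, hadj,
      Equiv.eq_symm_apply]
    constructor
    · rintro (h | h)
      · right; exact Fin.ext (by simpa using h.symm)
      · left; exact Fin.ext (by simp; omega)
    · rintro (h | h) <;> rw [h] <;> simp <;> omega
  have hnbr_lo : ∀ a : α, (e a).val = 0 →
      H.neighborSet a = {e.symm ⟨1, h1⟩} := by
    intro a hka
    ext b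
    simp only [mem_neighborSet, Set.mem_singleton_iff, hadj, Equiv.eq_symm_apply]
    constructor
    · rintro (h | h)
      · exact Fin.ext (by simp; omega)
      · exact absurd h (by omega)
    · intro h; rw [h]; left; simp; omega
  have hnbr_hi : ∀ (k : ℕ) (hk0 : 0 < k) (hkn : k + 1 = n) (a : α), (e a).val = k →
      H.neighborSet a = {e.symm ⟨k - 1, by omega⟩} := by
    intro k hk0 hkn a hka
    subst hka
    ext b
    simp only [mem_neighborSet, Set.mem_singleton_iff, hadj, Equiv.eq_symm_apply]
    have hbl := (e b).isLt
    constructor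
    · rintro (h | h)
      · exact absurd h (by omega)
      · exact Fin.ext (by simp; omega)
    · intro h; rw [h]; right; simp; omega
  have hdeg : ∀ a : α, (H.neighborSet a).ncard = 1 ∨ (H.neighborSet a).ncard = 2 := by
    intro a
    have hlt := (e a).isLt
    by_cases hka : (e a).val = 0
    · left; rw [hnbr_lo a hka]; exact Set.ncard_singleton _
    by_cases hkb : (e a).val + 1 = n
    · left; rw [hnbr_hi (e a).val (by omega) hkb a rfl]; exact Set.ncard_singleton _
    · right
      rw [hnbr_mid (e a).val (by omega) (by omega) a rfl]
      refine Set.ncard_pair ?_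
      intro hcon
      have := e.symm.injective hcon
      simp only [Fin.mk.injEq] at this
      omega
  refine ⟨?_, ?_, ?_, hdeg⟩
  · -- connected
    have key : ∀ k : ℕ, ∀ a : α, (e a).val = k → H.Reachable (e.symm ⟨0, h0⟩) a := by
      intro k
      induction k with
      | zero =>
        intro a ha
        have : e.symm ⟨0, h0⟩ = a := by
          rw [Equiv.symm_apply_eq]; exact (Fin.ext ha).symm
        rw [this]
      | succ j ih =>
        intro a ha
        have hj : j < n := by have := (e a).isLt; omega
        have hb : (e (e.symm ⟨j, hj⟩)).val = j := by simp
        have hadj' : H.Adj (e.symm ⟨j, hj⟩) a := (hadj _ a).mpr (Or.inl (by omega))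
        exact (ih _ hb).trans hadj'.reachable
    haveI : Nonempty α := ⟨e.symm ⟨0, h0⟩⟩
    exact ⟨fun x y => ((key _ x rfl).symm.trans (key _ y rfl))⟩
  · -- acyclic
    intro v c hc
    obtain ⟨x, hx, hmax⟩ := Finset.exists_max_image c.support.toFinset (fun z => (e z).val)
      ⟨v, by simp⟩
    rw [List.mem_toFinset] at hx
    have hmax' : ∀ y ∈ (c.rotate x hx).support, (e y).val ≤ (e x).val := by
      intro y hy
      rw [Walk.support_eq_cons, List.mem_cons] at hy
      rcases hy with rfl | hy
      · exact le_refl _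
      · have : y ∈ c.support.tail := (Walk.support_rotate c x hx).mem_iff.mp hy
        exact hmax y (List.mem_toFinset.mpr (List.mem_of_mem_tail this))
    have hc' := hc.rotate hx
    set c' := c.rotate x hx with hc'def
    obtain ⟨y₁, hxy, q, hq⟩ := Walk.not_nil_iff.mp hc'.not_nil
    have hlen : 2 ≤ q.length := by
      have h3 := hc'.three_le_length
      rw [hq] at h3; simp only [Walk.length_cons] at h3; omega
    have hqnil : ¬ q.reverse.Nil := by
      rw [Walk.not_nil_iff_lt_length]; simp; omega
    obtain ⟨z, hxz, q₂, hq₂⟩ := Walk.not_nil_iff.mp hqnil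
    have hzq : z ∈ q.support := by
      have : z ∈ q.reverse.support := by rw [hq₂]; simp
      rwa [Walk.support_reverse, List.mem_reverse] at this
    have hzy : z ≠ y₁ := by
      rintro rfl
      have hmem : s(x, z) ∈ q.edges := by
        have : s(x, z) ∈ q.reverse.edges := by rw [hq₂]; simp
        rwa [Walk.edges_reverse, List.mem_reverse] at this
      have hnd : c'.edges.Nodup := hc'.isCircuit.isTrail.edges_nodup
      rw [hq, Walk.edges_cons] at hnd
      exact (List.nodup_cons.mp hnd).1 hmem
    have hy₁m : (e y₁).val ≤ (e x).val := by
      apply hmax'; rw [hq]; simp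
    have hzm : (e z).val ≤ (e x).val := by
      apply hmax'; rw [hq]
      simp only [Walk.support_cons]
      exact List.mem_cons_of_mem _ hzq
    have h₁ := (hadj x y₁).mp hxy
    have h₂ := (hadj x z).mp hxz
    have : (e y₁) = (e z) := Fin.ext (by omega)
    exact hzy (e.injective this).symm
  · -- degree-one set
    have hne01 : e.symm ⟨0, h0⟩ ≠ e.symm ⟨n - 1, by omega⟩ := by
      intro hcon
      have := e.symm.injective hcon
      simp only [Fin.mk.injEq] at this
      omega
    have hset : {v | (H.neighborSet v).ncard = 1} = {e.symm ⟨0, h0⟩, e.symm ⟨n - 1, by omega⟩} := by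
      ext a
      have hlt := (e a).isLt
      simp only [Set.mem_setOf_eq, Set.mem_insert_iff, Set.mem_singleton_iff,
        Equiv.eq_symm_apply]
      by_cases hka : (e a).val = 0
      · rw [hnbr_lo a hka, Set.ncard_singleton]
        exact ⟨fun _ => Or.inl (Fin.ext hka), fun _ => rfl⟩
      by_cases hkb : (e a).val + 1 = n
      · rw [hnbr_hi (e a).val (by omega) hkb a rfl, Set.ncard_singleton]
        exact ⟨fun _ => Or.inr (Fin.ext (by simp; omega)), fun _ => rfl⟩
      · have hne : e.symm ⟨(e a).val - 1, by have := (e a).isLt; omega⟩ ≠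
            e.symm ⟨(e a).val + 1, by have := (e a).isLt; omega⟩ := by
          intro hcon
          have := e.symm.injective hcon
          simp only [Fin.mk.injEq] at this
          omega
        rw [hnbr_mid (e a).val (by omega) (by omega) a rfl, Set.ncard_pair hne]
        constructor
        · intro h; exact absurd h (by norm_num)
        · rintro (h | h) <;>
            { have := congrArg Fin.val h; simp at this; omega }
    rw [hset]
    exact Set.ncard_pair hne01


end PathGraph

section Forward
variable [Fintype V] [DecidableEq V] {G : SimpleGraph V} {s t : V}

lemma encode_isPathGraph (hst : s ≠ t) (hreach : G.Reachable s t)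
    {U : Set V} (hU : ShortestPathSet G s t U) :
    IsPathGraph ((newG G s t).induce (Sum.inl '' U ∪ Set.range Sum.inr)) := by
  classical
  obtain ⟨p, hp, hlen, hUeq⟩ := hU
  have hd : 1 ≤ G.dist s t := hreach.pos_dist_of_ne hst
  set d := G.dist s t with hd_def
  set A : Set (Wt V) := Sum.inl '' U ∪ Set.range Sum.inr with hA
  have hmemU : ∀ w : V, (Sum.inl w : Wt V) ∈ A ↔ w ∈ U := by
    intro w
    simp [hA]
  have hmemr : ∀ i : Fin 4, (Sum.inr i : Wt V) ∈ A := by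
    intro i; simp [hA]
  have hwU : ∀ w ∈ U, G.dist s w ≤ d ∧ p.getVert (G.dist s w) = w := by
    intro w hw
    rw [hUeq] at hw
    obtain ⟨i, hgi, hi⟩ := (Walk.mem_support_iff_exists_getVert).mp hw
    have hdw : G.dist s w = i := by
      rw [← hgi]; exact dist_getVert p hlen i hi
    rw [hdw, hgi]
    exact ⟨by omega, rfl⟩
  have hgv : ∀ i, i ≤ d → p.getVert i ∈ U ∧ G.dist s (p.getVert i) = i := by
    intro i hi
    have hi' : i ≤ p.length := by omega
    refine ⟨?_, dist_getVert p hlen i hi'⟩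
    rw [hUeq]
    exact Walk.mem_support_iff_exists_getVert.mpr ⟨i, rfl, hi'⟩
  have hinjU : ∀ w w', w ∈ U → w' ∈ U → G.dist s w = G.dist s w' → w = w' := by
    intro w w' hw hw' hdd
    have h1 := (hwU w hw).2
    have h2 := (hwU w' hw').2
    rw [← h1, ← h2, hdd]
  have hs0 : G.dist s s = 0 := SimpleGraph.dist_self
  have hsU : s ∈ U := by
    have := (hgv 0 (by omega)).1
    rwa [p.getVert_zero] at this
  have htU : t ∈ U := by
    have := (hgv d (le_refl d)).1
    rwa [show p.getVert d = t from by rw [← hlen]; exact p.getVert_length] at this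
  have htd : G.dist s t = d := rfl
  have hadjU : ∀ w w', w ∈ U → w' ∈ U →
      (G.Adj w w' ↔ (G.dist s w + 1 = G.dist s w' ∨ G.dist s w' + 1 = G.dist s w)) := by
    intro w w' hw hw'
    obtain ⟨hwd, hwg⟩ := hwU w hw
    obtain ⟨hwd', hwg'⟩ := hwU w' hw'
    constructor
    · intro h
      obtain ⟨q, -⟩ := exists_walk_take p (G.dist s w) (by omega)
      obtain ⟨q2, -⟩ := exists_walk_take p (G.dist s w') (by omega)
      have h1 : G.dist s w' ≤ G.dist s w + 1 := dist_le_succ_of_adj h ⟨hwg ▸ q⟩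
      have h2 : G.dist s w ≤ G.dist s w' + 1 := dist_le_succ_of_adj h.symm ⟨hwg' ▸ q2⟩
      have h3 : G.dist s w ≠ G.dist s w' := fun hc => h.ne (hinjU w w' hw hw' hc)
      omega
    · rintro (h | h)
      · have := p.adj_getVert_succ (i := G.dist s w) (by omega)
        rwa [hwg, show p.getVert (G.dist s w + 1) = w' from by rw [h, hwg']] at this
      · have := p.adj_getVert_succ (i := G.dist s w') (by omega)
        have h2 := this
        rw [hwg', show p.getVert (G.dist s w' + 1) = w from by rw [h, hwg]] at h2
        exact h2.symm
  -- the height function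
  set F : Wt V → ℕ := fun x => match x with
    | Sum.inl w => G.dist s w + 2
    | Sum.inr i => if i = 0 then 1 else if i = 1 then 0 else if i = 2 then d + 3 else d + 4
    with hF
  have hFbound : ∀ x ∈ A, F x < d + 5 := by
    rintro (w | i) hx
    · have hw := (hmemU w).mp hx
      have := (hwU w hw).1
      simp only [hF]
      omega
    · fin_cases i <;> simp [hF] <;> omega
  set f : A → Fin (d + 5) := fun x => ⟨F x.val, hFbound x.val x.property⟩ with hf
  have hbij : Function.Bijective f := by
    constructor
    · rintro ⟨x, hx⟩ ⟨y, hy⟩ hxy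
      have hval : F x = F y := congrArg Fin.val hxy
      apply Subtype.ext
      match x, y with
      | Sum.inl w, Sum.inl w' =>
        simp only [hF] at hval
        exact congrArg Sum.inl
          (hinjU w w' ((hmemU w).mp hx) ((hmemU w').mp hy) (by omega))
      | Sum.inl w, Sum.inr i =>
        exfalso
        have hw := (hwU w ((hmemU w).mp hx)).1
        revert hval
        fin_cases i <;> simp [hF] <;> omega
      | Sum.inr i, Sum.inl w =>
        exfalso
        have hw := (hwU w ((hmemU w).mp hy)).1
        revert hval
        fin_cases i <;> simp [hF] <;> omega
      | Sum.inr i, Sum.inr j =>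
        refine congrArg Sum.inr ?_
        revert hval
        fin_cases i <;> fin_cases j <;> simp [hF] <;> omega
    · rintro ⟨k, hk⟩
      rcases Nat.lt_or_ge k 2 with hk2 | hk2
      · rcases Nat.lt_or_ge k 1 with hk1 | hk1
        · exact ⟨⟨Sum.inr 1, hmemr 1⟩, by apply Fin.ext; simp [hf, hF]; omega⟩
        · exact ⟨⟨Sum.inr 0, hmemr 0⟩, by apply Fin.ext; simp [hf, hF]; omega⟩
      rcases Nat.lt_or_ge k (d + 3) with hk3 | hk3
      · refine ⟨⟨Sum.inl (p.getVert (k - 2)), (hmemU _).mpr (hgv (k - 2) (by omega)).1⟩, ?_⟩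
        apply Fin.ext
        simp only [hf, hF, (hgv (k - 2) (by omega : k - 2 ≤ d)).2]
        omega
      rcases Nat.lt_or_ge k (d + 4) with hk4 | hk4
      · exact ⟨⟨Sum.inr 2, hmemr 2⟩, by apply Fin.ext; simp [hf, hF]; omega⟩
      · exact ⟨⟨Sum.inr 3, hmemr 3⟩, by apply Fin.ext; simp [hf, hF]; omega⟩
  refine isPathGraph_of_equiv _ (d + 5) (by omega) (Equiv.ofBijective f hbij) ?_
  rintro ⟨x, hx⟩ ⟨y, hy⟩
  have hind : ((newG G s t).induce A).Adj ⟨x, hx⟩ ⟨y, hy⟩ ↔ (newG G s t).Adj x y := by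
    simp [SimpleGraph.comap_adj]
  rw [hind]
  show (newG G s t).Adj x y ↔ F x + 1 = F y ∨ F y + 1 = F x
  match x, y with
  | Sum.inl w, Sum.inl w' =>
    rw [adj_inl_inl, hadjU w w' ((hmemU w).mp hx) ((hmemU w').mp hy)]
    simp only [hF]
    omega
  | Sum.inl w, Sum.inr i =>
    rw [adj_inl_inr]
    have hw := (hwU w ((hmemU w).mp hx)).1
    have hws : w = s ↔ G.dist s w = 0 :=
      ⟨fun h => h ▸ hs0, fun h => hinjU w s ((hmemU w).mp hx) hsU (by rw [h, hs0])⟩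
    have hwt : w = t ↔ G.dist s w = d :=
      ⟨fun h => h ▸ htd, fun h => hinjU w t ((hmemU w).mp hx) htU (by rw [h, htd])⟩
    fin_cases i <;>
      simp only [hF, Fin.isValue, hws, hwt] <;>
      simp <;>
      omega
  | Sum.inr i, Sum.inl w =>
    rw [SimpleGraph.adj_comm, adj_inl_inr]
    have hw := (hwU w ((hmemU w).mp hy)).1
    have hws : w = s ↔ G.dist s w = 0 :=
      ⟨fun h => h ▸ hs0, fun h => hinjU w s ((hmemU w).mp hy) hsU (by rw [h, hs0])⟩
    have hwt : w = t ↔ G.dist s w = d :=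
      ⟨fun h => h ▸ htd, fun h => hinjU w t ((hmemU w).mp hy) htU (by rw [h, htd])⟩
    fin_cases i <;>
      simp only [hF, Fin.isValue, hws, hwt] <;>
      simp <;>
      omega
  | Sum.inr i, Sum.inr j =>
    rw [adj_inr_inr]
    fin_cases i <;> fin_cases j <;> simp [hF] <;> omega

end Forward

section BackAux
variable {G : SimpleGraph V} {s t : V}

lemma nbr_inr1 {z : Wt V} (h : (newG G s t).Adj (inr 1) z) : z = inr 0 := by
  match z with
  | inl w =>
    rw [SimpleGraph.adj_comm, adj_inl_inr] at h
    rcases h with ⟨-, h⟩ | ⟨-, h⟩ <;> simp at h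
  | inr j =>
    rw [adj_inr_inr] at h
    rcases h with ⟨h, -⟩ | ⟨-, rfl⟩ | ⟨h, -⟩ | ⟨h, -⟩ <;> first | rfl | simp at h

lemma nbr_inr3 {z : Wt V} (h : (newG G s t).Adj (inr 3) z) : z = inr 2 := by
  match z with
  | inl w =>
    rw [SimpleGraph.adj_comm, adj_inl_inr] at h
    rcases h with ⟨-, h⟩ | ⟨-, h⟩ <;> simp at h
  | inr j =>
    rw [adj_inr_inr] at h
    rcases h with ⟨h, -⟩ | ⟨h, -⟩ | ⟨h, -⟩ | ⟨-, rfl⟩ <;> first | rfl | simp at h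

lemma nbr_inr0 {z : Wt V} (h : (newG G s t).Adj (inr 0) z) : z = inr 1 ∨ z = inl s := by
  match z with
  | inl w =>
    rw [SimpleGraph.adj_comm, adj_inl_inr] at h
    rcases h with ⟨rfl, -⟩ | ⟨-, h⟩
    · exact Or.inr rfl
    · simp at h
  | inr j =>
    rw [adj_inr_inr] at h
    rcases h with ⟨-, rfl⟩ | ⟨h, -⟩ | ⟨h, -⟩ | ⟨h, -⟩ <;> first | exact Or.inl rfl | simp at h

lemma nbr_inr2 {z : Wt V} (h : (newG G s t).Adj (inr 2) z) : z = inr 3 ∨ z = inl t := by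
  match z with
  | inl w =>
    rw [SimpleGraph.adj_comm, adj_inl_inr] at h
    rcases h with ⟨-, h⟩ | ⟨rfl, -⟩
    · simp at h
    · exact Or.inr rfl
  | inr j =>
    rw [adj_inr_inr] at h
    rcases h with ⟨h, -⟩ | ⟨h, -⟩ | ⟨-, rfl⟩ | ⟨h, -⟩ <;> first | exact Or.inl rfl | simp at h

lemma nbr_inl {w : V} {z : Wt V} (h : (newG G s t).Adj (inl w) z) :
    (∃ w', z = inl w' ∧ G.Adj w w') ∨ (w = s ∧ z = inr 0) ∨ (w = t ∧ z = inr 2) := by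
  match z with
  | inl w' => exact Or.inl ⟨w', rfl, adj_inl_inl.mp h⟩
  | inr j =>
    rw [adj_inl_inr] at h
    rcases h with ⟨rfl, rfl⟩ | ⟨rfl, rfl⟩
    · exact Or.inr (Or.inl ⟨rfl, rfl⟩)
    · exact Or.inr (Or.inr ⟨rfl, rfl⟩)

lemma walk_down' {A : Set (Wt V)} {x y : ↥A}
    (P : ((newG G s t).induce A).Walk x y)
    (hsup : ∀ z ∈ P.support, ∃ w : V, (z : Wt V) = inl w) :
    ∀ a b : V, (x : Wt V) = inl a → (y : Wt V) = inl b →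
    ∃ q : G.Walk a b, q.length = P.length ∧
      q.support.map (inl : V → Wt V) = P.support.map Subtype.val := by
  induction P with
  | nil =>
    intro a b hua hub
    obtain rfl : a = b := by rw [hua] at hub; exact inl.inj hub
    exact ⟨Walk.nil, rfl, by simp [hua]⟩
  | @cons u v w h P ih =>
    intro a b hua hwb
    obtain ⟨c, hc⟩ := hsup v (by simp)
    have h' : (newG G s t).Adj (u : Wt V) (v : Wt V) := h
    rw [hua, hc] at h'
    have hadj : G.Adj a c := adj_inl_inl.mp h'
    obtain ⟨q, hq1, hq2⟩ := ih (fun z hz => hsup z (by simp [hz])) c b hc hwb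
    exact ⟨Walk.cons hadj q, by simp [hq1],
      by simp only [Walk.support_cons, List.map_cons, hq2, hua]⟩

end BackAux

section Extract
variable [Fintype V] [DecidableEq V] {G : SimpleGraph V} {s t : V}

lemma extract {W : Set V}
    (hs : s ∈ W) (ht : t ∈ W) (hcard : W.ncard = G.dist s t + 1)
    (hpg : IsPathGraph ((newG G s t).induce (inl '' W ∪ Set.range inr))) :
    ShortestPathSet G s t W := by
  classical
  set d := G.dist s t with hd
  set A : Set (Wt V) := inl '' W ∪ Set.range inr with hA
  set H' := (newG G s t).induce A with hH
  have hmemU : ∀ w : V, (inl w : Wt V) ∈ A ↔ w ∈ W := by intro w; simp [hA]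
  have hmemr : ∀ i : Fin 4, (inr i : Wt V) ∈ A := by intro i; simp [hA]
  obtain ⟨P0⟩ := hpg.1.preconnected ⟨inl s, (hmemU s).mpr hs⟩ ⟨inl t, (hmemU t).mpr ht⟩
  obtain ⟨P, hP⟩ := P0.toPath
  have hproj : ∀ (z z' : ↥A), H'.Adj z z' → (newG G s t).Adj z z' := fun z z' h => h
  have hC1 : (⟨inr 1, hmemr 1⟩ : ↥A) ∉ P.support := by
    intro hmem
    obtain ⟨y, z, hyz, hay, haz, -, -⟩ :=
      two_nbrs hP hmem (by simp) (by simp)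
    exact hyz (Subtype.ext ((nbr_inr1 (hproj _ _ hay)).trans
      (nbr_inr1 (hproj _ _ haz)).symm))
  have hC3 : (⟨inr 3, hmemr 3⟩ : ↥A) ∉ P.support := by
    intro hmem
    obtain ⟨y, z, hyz, hay, haz, -, -⟩ :=
      two_nbrs hP hmem (by simp) (by simp)
    exact hyz (Subtype.ext ((nbr_inr3 (hproj _ _ hay)).trans
      (nbr_inr3 (hproj _ _ haz)).symm))
  have hC0 : (⟨inr 0, hmemr 0⟩ : ↥A) ∉ P.support := by
    intro hmem
    obtain ⟨y, z, hyz, hay, haz, hys, hzs⟩ :=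
      two_nbrs hP hmem (by simp) (by simp)
    rcases nbr_inr0 (hproj _ _ hay) with h1 | h1 <;>
      rcases nbr_inr0 (hproj _ _ haz) with h2 | h2
    · exact hyz (Subtype.ext (h1.trans h2.symm))
    · exact hC1 (by rwa [show (⟨inr 1, hmemr 1⟩ : ↥A) = y from Subtype.ext h1.symm])
    · exact hC1 (by rwa [show (⟨inr 1, hmemr 1⟩ : ↥A) = z from Subtype.ext h2.symm])
    · exact hyz (Subtype.ext (h1.trans h2.symm))
  have hC2 : (⟨inr 2, hmemr 2⟩ : ↥A) ∉ P.support := by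
    intro hmem
    obtain ⟨y, z, hyz, hay, haz, hys, hzs⟩ :=
      two_nbrs hP hmem (by simp) (by simp)
    rcases nbr_inr2 (hproj _ _ hay) with h1 | h1 <;>
      rcases nbr_inr2 (hproj _ _ haz) with h2 | h2
    · exact hyz (Subtype.ext (h1.trans h2.symm))
    · exact hC3 (by rwa [show (⟨inr 3, hmemr 3⟩ : ↥A) = y from Subtype.ext h1.symm])
    · exact hC3 (by rwa [show (⟨inr 3, hmemr 3⟩ : ↥A) = z from Subtype.ext h2.symm])
    · exact hyz (Subtype.ext (h1.trans h2.symm))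
  have hsup : ∀ z ∈ P.support, ∃ w : V, (z : Wt V) = inl w := by
    rintro ⟨zv, hzA⟩ hz
    match zv, hzA, hz with
    | inl w, _, _ => exact ⟨w, rfl⟩
    | inr i, hzA, hz =>
    exfalso
    fin_cases i
    · exact hC0 hz
    · exact hC1 hz
    · exact hC2 hz
    · exact hC3 hz
  obtain ⟨q, hqlen, hqsup⟩ := walk_down' P hsup s t rfl rfl
  have hqW : ∀ w ∈ q.support, w ∈ W := by
    intro w hw
    have hmm : (inl w : Wt V) ∈ q.support.map inl := List.mem_map_of_mem hw
    rw [hqsup] at hmm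
    obtain ⟨z, hz, hzw⟩ := List.mem_map.mp hmm
    exact (hmemU w).mp (hzw ▸ z.property)
  have hnodupP : (P.support.map (Subtype.val : ↥A → Wt V)).Nodup :=
    hP.support_nodup.map Subtype.val_injective
  have hnodup : q.support.Nodup := by
    have h2 : (q.support.map (inl : V → Wt V)).Nodup := hqsup ▸ hnodupP
    exact h2.of_map _
  have hsublen : q.support.length ≤ d + 1 := by
    have h1 : {x | x ∈ q.support}.ncard = q.support.length := ncard_mem_list hnodup
    have h2 : {x | x ∈ q.support} ⊆ W := fun x hx => hqW x hx
    have h3 := Set.ncard_le_ncard h2 W.toFinite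
    omega
  have hlq : q.length = d := by
    have h1 : d ≤ q.length := SimpleGraph.dist_le q
    have h2 : q.support.length = q.length + 1 := Walk.length_support q
    omega
  refine ⟨q, (SimpleGraph.Walk.isPath_def q).mpr hnodup, hlq, ?_⟩
  refine (Set.eq_of_subset_of_ncard_le (show {v | v ∈ q.support} ⊆ W from fun x hx => hqW x hx) ?_ W.toFinite).symm
  have hfin : ({v | v ∈ q.support} : Set V).ncard = d + 1 := by
    rw [ncard_mem_list hnodup, Walk.length_support, hlq]
  exact le_of_eq (by rw [hcard, hfin])

end Extract

section BackMain
variable [Fintype V] [DecidableEq V] {G : SimpleGraph V} {s t : V}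

lemma sps_facts {U : Set V} (hU : ShortestPathSet G s t U) :
    s ∈ U ∧ t ∈ U ∧ U.ncard = G.dist s t + 1 := by
  classical
  obtain ⟨p, hp, hlen, hUeq⟩ := hU
  subst hUeq
  refine ⟨p.start_mem_support, p.end_mem_support, ?_⟩
  rw [ncard_mem_list hp.support_nodup, Walk.length_support, hlen]

lemma chain_nbrs (hst : s ≠ t) (hreach : G.Reachable s t) {U : Set V}
    (hU : ShortestPathSet G s t U) {w : V} (hw : w ∈ U) :
    ∃ n₁ n₂ : Wt V, n₁ ≠ n₂ ∧ (newG G s t).Adj (inl w) n₁ ∧ (newG G s t).Adj (inl w) n₂ ∧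
      n₁ ∈ inl '' U ∪ ({inr 0, inr 2} : Set (Wt V)) ∧
      n₂ ∈ inl '' U ∪ ({inr 0, inr 2} : Set (Wt V)) := by
  obtain ⟨p, hp, hlen, hUeq⟩ := hU
  have hd : 1 ≤ G.dist s t := hreach.pos_dist_of_ne hst
  set d := G.dist s t with hddef
  have hgvU : ∀ j, j ≤ d → p.getVert j ∈ U := by
    intro j hj
    rw [hUeq]
    exact Walk.mem_support_iff_exists_getVert.mpr ⟨j, rfl, by omega⟩
  rw [hUeq] at hw
  obtain ⟨i, hgi, hi⟩ := Walk.mem_support_iff_exists_getVert.mp hw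
  rw [hlen] at hi
  by_cases hi0 : i = 0
  · have hws : w = s := by rw [← hgi, hi0, p.getVert_zero]
    subst hws
    refine ⟨inr 0, inl (p.getVert 1), by simp, ?_, ?_, ?_, ?_⟩
    · exact adj_inl_inr.mpr (Or.inl ⟨rfl, rfl⟩)
    · have := p.adj_getVert_succ (i := 0) (by omega)
      rw [p.getVert_zero] at this
      exact adj_inl_inl.mpr (by simpa using this)
    · exact Or.inr (by simp)
    · exact Or.inl ⟨p.getVert 1, hgvU 1 (by omega), rfl⟩
  by_cases hid : i = d
  · have he2 : p.getVert d = t := by rw [← hlen]; exact p.getVert_length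
    have hwt : w = t := by rw [← hgi, hid, he2]
    subst hwt
    refine ⟨inl (p.getVert (d - 1)), inr 2, by simp, ?_, ?_, ?_, ?_⟩
    · have := p.adj_getVert_succ (i := d - 1) (by omega)
      have he : d - 1 + 1 = d := by omega
      rw [he, he2] at this
      exact adj_inl_inl.mpr this.symm
    · exact adj_inl_inr.mpr (Or.inr ⟨rfl, rfl⟩)
    · exact Or.inl ⟨p.getVert (d - 1), hgvU (d - 1) (by omega), rfl⟩
    · exact Or.inr (by simp)
  · have hdm : ∀ j, j ≤ d → G.dist s (p.getVert j) = j := by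
      intro j hj
      exact dist_getVert p hlen j (by omega)
    have hne : p.getVert (i - 1) ≠ p.getVert (i + 1) := by
      intro hcon
      have h1 := hdm (i - 1) (by omega)
      have h2 := hdm (i + 1) (by omega)
      rw [hcon] at h1
      omega
    refine ⟨inl (p.getVert (i - 1)), inl (p.getVert (i + 1)), by simpa using hne, ?_, ?_, ?_, ?_⟩
    · have := p.adj_getVert_succ (i := i - 1) (by omega)
      have he : i - 1 + 1 = i := by omega
      rw [he, hgi] at this
      exact adj_inl_inl.mpr this.symm
    · have := p.adj_getVert_succ (i := i) (by omega)
      rw [hgi] at this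
      exact adj_inl_inl.mpr this
    · exact Or.inl ⟨p.getVert (i - 1), hgvU (i - 1) (by omega), rfl⟩
    · exact Or.inl ⟨p.getVert (i + 1), hgvU (i + 1) (by omega), rfl⟩

lemma backward_step (hst : s ≠ t) (hreach : G.Reachable s t) {U : Set V}
    (hU : ShortestPathSet G s t U) {B : Set (Wt V)}
    (hstep : TJStepV (inl '' U ∪ Set.range inr) B)
    (hB : IsPathGraph ((newG G s t).induce B)) :
    ∃ W : Set V, ShortestPathSet G s t W ∧ TJStepV U W ∧ B = inl '' W ∪ Set.range inr := by
  classical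
  obtain ⟨x, y, hx, hy, hBeq⟩ := hstep
  set d := G.dist s t with hddef
  obtain ⟨hsU, htU, hcardU⟩ := sps_facts hU
  obtain ⟨v, rfl⟩ : ∃ v, y = inl v := by
    match y with
    | inl v => exact ⟨v, rfl⟩
    | inr i => exact absurd (Or.inr ⟨i, rfl⟩) hy
  have hvU : v ∉ U := fun h => hy (Or.inl ⟨v, h, rfl⟩)
  have hmemB : ∀ z : Wt V, z ∈ B ↔ ((z ∈ inl '' U ∪ Set.range inr ∧ z ≠ x) ∨ z = inl v) := by
    intro z
    rw [hBeq]
    simp only [Set.mem_union, Set.mem_diff, Set.mem_singleton_iff]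
  have hdeg := hB.2.2.2
  have hproj : ∀ (z z' : ↥B), ((newG G s t).induce B).Adj z z' →
      (newG G s t).Adj z z' := fun z z' h => h
  -- the two "degree 3 / degree 0" contradiction helpers
  have hcase13 : x = inr 1 ∨ x = inr 3 → False := by
    intro hx13
    have hvB : (inl v : Wt V) ∈ B := (hmemB _).mpr (Or.inr rfl)
    have hnon : (((newG G s t).induce B).neighborSet ⟨inl v, hvB⟩).Nonempty := by
      apply Set.nonempty_of_ncard_ne_zero
      rcases hdeg ⟨inl v, hvB⟩ with h | h <;> omega
    obtain ⟨yy, hyy⟩ := hnon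
    rcases nbr_inl (hproj _ _ hyy) with ⟨w, hwv, hadjvw⟩ | ⟨rfl, -⟩ | ⟨rfl, -⟩
    · -- w ∈ U, and then inl w has ≥ 3 neighbors
      have hwB : (inl w : Wt V) ∈ B := hwv ▸ yy.property
      have hwU : w ∈ U := by
        rcases (hmemB _).mp hwB with ⟨hmem, -⟩ | heq
        · rcases hmem with ⟨w', hw', heq'⟩ | ⟨i, hi⟩
          · exact (inl.inj heq') ▸ hw'
          · simp at hi
        · exact absurd ((inl.inj heq) ▸ hadjvw) (fun h => h.ne rfl)
      obtain ⟨n₁, n₂, hn12, ha1, ha2, hm1, hm2⟩ := chain_nbrs hst hreach hU hwU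
      have hBn : ∀ n : Wt V, n ∈ inl '' U ∪ ({inr 0, inr 2} : Set (Wt V)) → n ∈ B := by
        intro n hn
        refine (hmemB n).mpr (Or.inl ⟨?_, ?_⟩)
        · rcases hn with h | h
          · exact Or.inl h
          · rcases h with rfl | rfl
            · exact Or.inr ⟨0, rfl⟩
            · exact Or.inr ⟨2, rfl⟩
        · rcases hn with ⟨w', -, rfl⟩ | h
          · rcases hx13 with rfl | rfl <;> simp
          · rcases h with rfl | rfl <;> rcases hx13 with rfl | rfl <;> simp
      have hnlv : ∀ n : Wt V, n ∈ inl '' U ∪ ({inr 0, inr 2} : Set (Wt V)) → n ≠ inl v := by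
        rintro n (⟨w', hw', rfl⟩ | h)
        · intro hcon
          exact hvU ((inl.inj hcon) ▸ hw')
        · rcases h with rfl | rfl <;> simp
      have hsubset : ({⟨inl v, hvB⟩, ⟨n₁, hBn n₁ hm1⟩, ⟨n₂, hBn n₂ hm2⟩} : Set ↥B) ⊆
          ((newG G s t).induce B).neighborSet ⟨inl w, hwB⟩ := by
        rintro z (rfl | rfl | rfl)
        · exact (show (newG G s t).Adj (inl w) (inl v) from adj_inl_inl.mpr hadjvw.symm)
        · exact ha1
        · exact ha2
      have hne1 : (⟨inl v, hvB⟩ : ↥B) ≠ ⟨n₁, hBn n₁ hm1⟩ :=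
        fun hcon => hnlv n₁ hm1 (congrArg Subtype.val hcon).symm
      have hne2 : (⟨inl v, hvB⟩ : ↥B) ≠ ⟨n₂, hBn n₂ hm2⟩ :=
        fun hcon => hnlv n₂ hm2 (congrArg Subtype.val hcon).symm
      have hne3 : (⟨n₁, hBn n₁ hm1⟩ : ↥B) ≠ ⟨n₂, hBn n₂ hm2⟩ :=
        fun hcon => hn12 (congrArg Subtype.val hcon)
      have h3 : ({⟨inl v, hvB⟩, ⟨n₁, hBn n₁ hm1⟩, ⟨n₂, hBn n₂ hm2⟩} : Set ↥B).ncard = 3 := by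
        rw [Set.ncard_insert_of_notMem (by simp [Set.mem_insert_iff, hne1, hne2])
          (Set.toFinite _), Set.ncard_pair hne3]
      have hle := Set.ncard_le_ncard hsubset (Set.toFinite _)
      rcases hdeg ⟨inl w, hwB⟩ with h | h <;> omega
    · exact hvU hsU
    · exact hvU htU
  match x, hx with
  | inr i, hx =>
    exfalso
    fin_cases i
    · -- x = inr 0 : inr 1 becomes isolated
      have h1B : (inr 1 : Wt V) ∈ B :=
        (hmemB _).mpr (Or.inl ⟨Or.inr ⟨1, rfl⟩, by simp⟩)
      have hempty : ((newG G s t).induce B).neighborSet ⟨inr 1, h1B⟩ = ∅ := by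
        ext z
        simp only [mem_neighborSet, Set.mem_empty_iff_false, iff_false]
        intro hadj
        have h0 : (z : Wt V) = inr 0 := nbr_inr1 (hproj _ _ hadj)
        have h0B : (inr 0 : Wt V) ∈ B := h0 ▸ z.property
        rcases (hmemB _).mp h0B with ⟨-, hne⟩ | heq
        · exact hne rfl
        · simp at heq
      rcases hdeg ⟨inr 1, h1B⟩ with h | h <;> rw [hempty] at h <;> simp at h
    · exact hcase13 (Or.inl rfl)
    · -- x = inr 2 : inr 3 becomes isolated
      have h3B : (inr 3 : Wt V) ∈ B :=
        (hmemB _).mpr (Or.inl ⟨Or.inr ⟨3, rfl⟩, by simp⟩)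
      have hempty : ((newG G s t).induce B).neighborSet ⟨inr 3, h3B⟩ = ∅ := by
        ext z
        simp only [mem_neighborSet, Set.mem_empty_iff_false, iff_false]
        intro hadj
        have h0 : (z : Wt V) = inr 2 := nbr_inr3 (hproj _ _ hadj)
        have h0B : (inr 2 : Wt V) ∈ B := h0 ▸ z.property
        rcases (hmemB _).mp h0B with ⟨-, hne⟩ | heq
        · exact hne rfl
        · simp at heq
      rcases hdeg ⟨inr 3, h3B⟩ with h | h <;> rw [hempty] at h <;> simp at h
    · exact hcase13 (Or.inr rfl)
  | inl u, hx =>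
  have huU : u ∈ U := by
    rcases hx with ⟨u', hu', heq⟩ | ⟨i, heq⟩
    · exact (inl.inj heq) ▸ hu'
    · simp at heq
  by_cases hus : u = s
  · exfalso
    set S : Set ↥B := {z | (z : Wt V) = inr 0 ∨ (z : Wt V) = inr 1} with hS
    have hsB : (inl s : Wt V) ∉ B := by
      intro hcon
      rcases (hmemB _).mp hcon with ⟨-, hne⟩ | heq
      · exact hne (by rw [hus])
      · exact hvU ((inl.inj heq).symm ▸ hsU)
    have hclosed : ∀ a ∈ S, ∀ b, ((newG G s t).induce B).Adj a b → b ∈ S := by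
      rintro a (ha | ha) b hadj
      · have hGadj := hproj _ _ hadj
        rw [ha] at hGadj
        rcases nbr_inr0 hGadj with h | h
        · exact Or.inr h
        · exact absurd (h ▸ b.property) hsB
      · have hGadj := hproj _ _ hadj
        rw [ha] at hGadj
        exact Or.inl (nbr_inr1 hGadj)
    have h1B : (inr 1 : Wt V) ∈ B :=
      (hmemB _).mpr (Or.inl ⟨Or.inr ⟨1, rfl⟩, by simp [hus]⟩)
    have htB : (inl t : Wt V) ∈ B := by
      refine (hmemB _).mpr (Or.inl ⟨Or.inl ⟨t, htU, rfl⟩, fun hc => ?_⟩)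
      have h' : t = u := inl.inj hc
      exact hst (by rw [h', hus])
    have hreach' := hB.1.preconnected ⟨inr 1, h1B⟩ ⟨inl t, htB⟩
    have := mem_of_reachable_closed hclosed (show (⟨inr 1, h1B⟩ : ↥B) ∈ S from Or.inr rfl) hreach'
    rcases this with h | h <;> simp at h
  by_cases hut : u = t
  · exfalso
    set S : Set ↥B := {z | (z : Wt V) = inr 2 ∨ (z : Wt V) = inr 3} with hS
    have htB : (inl t : Wt V) ∉ B := by
      intro hcon
      rcases (hmemB _).mp hcon with ⟨-, hne⟩ | heq
      · exact hne (by rw [hut])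
      · exact hvU ((inl.inj heq).symm ▸ htU)
    have hclosed : ∀ a ∈ S, ∀ b, ((newG G s t).induce B).Adj a b → b ∈ S := by
      rintro a (ha | ha) b hadj
      · have hGadj := hproj _ _ hadj
        rw [ha] at hGadj
        rcases nbr_inr2 hGadj with h | h
        · exact Or.inr h
        · exact absurd (h ▸ b.property) htB
      · have hGadj := hproj _ _ hadj
        rw [ha] at hGadj
        exact Or.inl (nbr_inr3 hGadj)
    have h3B : (inr 3 : Wt V) ∈ B :=
      (hmemB _).mpr (Or.inl ⟨Or.inr ⟨3, rfl⟩, by simp [hut]⟩)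
    have hsB : (inl s : Wt V) ∈ B := by
      refine (hmemB _).mpr (Or.inl ⟨Or.inl ⟨s, hsU, rfl⟩, fun hc => ?_⟩)
      have h' : s = u := inl.inj hc
      exact hst (by rw [h', hut])
    have hreach' := hB.1.preconnected ⟨inr 3, h3B⟩ ⟨inl s, hsB⟩
    have := mem_of_reachable_closed hclosed (show (⟨inr 3, h3B⟩ : ↥B) ∈ S from Or.inr rfl) hreach'
    rcases this with h | h <;> simp at h
  · -- the real TJ step
    set W : Set V := (U \ {u}) ∪ {v} with hW
    have hsW : s ∈ W := Or.inl ⟨hsU, fun h => hus (h.symm ▸ rfl)⟩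
    have htW : t ∈ W := Or.inl ⟨htU, fun h => hut (h.symm ▸ rfl)⟩
    have hcardW : W.ncard = d + 1 := by
      rw [hW, Set.union_singleton,
        Set.ncard_insert_of_notMem (fun h => hvU h.1) (Set.toFinite _),
        Set.ncard_diff_singleton_of_mem huU, hcardU]
      have : 1 ≤ U.ncard := by rw [hcardU]; omega
      omega
    have hBenc : B = inl '' W ∪ Set.range inr := by
      ext z
      rw [hmemB]
      constructor
      · rintro (⟨hz1, hz2⟩ | rfl)
        · rcases hz1 with ⟨w', hw', rfl⟩ | ⟨i, rfl⟩
          · refine Or.inl ⟨w', Or.inl ⟨hw', fun hc => hz2 (by rw [show w' = u from hc])⟩, rfl⟩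
          · exact Or.inr ⟨i, rfl⟩
        · exact Or.inl ⟨v, Or.inr rfl, rfl⟩
      · rintro (⟨w', hw', rfl⟩ | ⟨i, rfl⟩)
        · rcases hw' with ⟨hw1, hw2⟩ | rfl
          · exact Or.inl ⟨Or.inl ⟨w', hw1, rfl⟩, fun hc => hw2 (inl.inj hc)⟩
          · exact Or.inr rfl
        · exact Or.inl ⟨Or.inr ⟨i, rfl⟩, by simp⟩
    refine ⟨W, extract hsW htW hcardW (hBenc ▸ hB), ⟨u, v, huU, hvU, rfl⟩, hBenc⟩

end BackMain

section Glue
variable {G : SimpleGraph V} {s t : V}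

lemma encode_inj {U1 U2 : Set V}
    (h : inl '' U1 ∪ Set.range inr = inl '' U2 ∪ Set.range (inr : Fin 4 → Wt V)) :
    U1 = U2 := by
  ext w
  constructor <;> intro hw
  · have hmm : (inl w : Wt V) ∈ inl '' U2 ∪ Set.range inr := h ▸ Or.inl ⟨w, hw, rfl⟩
    rcases hmm with ⟨w', hw', heq⟩ | ⟨i, hi⟩
    · exact (inl.inj heq) ▸ hw'
    · simp at hi
  · have hmm : (inl w : Wt V) ∈ inl '' U1 ∪ Set.range inr := h.symm ▸ Or.inl ⟨w, hw, rfl⟩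
    rcases hmm with ⟨w', hw', heq⟩ | ⟨i, hi⟩
    · exact (inl.inj heq) ▸ hw'
    · simp at hi

lemma encode_step_eq {U : Set V} {u v : V} :
    inl '' ((U \ {u}) ∪ {v}) ∪ Set.range inr =
      ((inl '' U ∪ Set.range (inr : Fin 4 → Wt V)) \ {inl u}) ∪ {inl v} := by
  ext z
  constructor
  · rintro (⟨w, hw, rfl⟩ | ⟨i, rfl⟩)
    · rcases hw with ⟨hw1, hw2⟩ | rfl
      · exact Or.inl ⟨Or.inl ⟨w, hw1, rfl⟩, fun hc => hw2 (inl.inj hc)⟩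
      · exact Or.inr rfl
    · exact Or.inl ⟨Or.inr ⟨i, rfl⟩, by simp⟩
  · rintro (⟨h1, h2⟩ | rfl)
    · rcases h1 with ⟨w, hw, rfl⟩ | ⟨i, rfl⟩
      · exact Or.inl ⟨w, Or.inl ⟨hw, fun hc => h2 (by simp [show w = u from hc])⟩, rfl⟩
      · exact Or.inr ⟨i, rfl⟩
    · exact Or.inl ⟨v, Or.inr rfl, rfl⟩

end Glue

theorem stmt16 [Fintype V] [DecidableEq V] (G : SimpleGraph V) (s t : V) (hst : s ≠ t)
    (hreach : G.Reachable s t)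
    (hall : ∀ v, OnShortest G s t v)
    (hlayer : ∀ u v, G.Adj u v → G.dist s u ≠ G.dist s v)
    (Vs Vt : Set V) (hVs : ShortestPathSet G s t Vs) (hVt : ShortestPathSet G s t Vt) :
    TJReachV (ShortestPathSet G s t) Vs Vt ↔
      TJReachV (fun U => IsPathGraph ((newG G s t).induce U))
        (Sum.inl '' Vs ∪ Set.range Sum.inr) (Sum.inl '' Vt ∪ Set.range Sum.inr) := by
  constructor
  · rintro ⟨l, g, hg0, hgl, hP, hstep⟩
    refine ⟨l, fun k => inl '' g k ∪ Set.range inr, by simp only [hg0], by simp only [hgl], ?_, ?_⟩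
    · intro k hk
      exact encode_isPathGraph hst hreach (hP k hk)
    · intro k hk
      obtain ⟨u, v, hu, hv, heq⟩ := hstep k hk
      refine ⟨inl u, inl v, Or.inl ⟨u, hu, rfl⟩, ?_, ?_⟩
      · rintro (⟨u', hu', heq'⟩ | ⟨i, hi⟩)
        · exact hv ((inl.inj heq') ▸ hu')
        · simp at hi
      · show inl '' g (k + 1) ∪ Set.range inr = (inl '' g k ∪ Set.range inr) \ {inl u} ∪ {inl v}
        rw [heq]
        exact encode_step_eq
  · rintro ⟨l, f, hf0, hfl, hP, hstep⟩
    have key : ∀ k, k ≤ l → ∃ g : ℕ → Set V, g 0 = Vs ∧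
        (∀ j, j ≤ k → ShortestPathSet G s t (g j) ∧ f j = inl '' g j ∪ Set.range inr) ∧
        (∀ j, j < k → TJStepV (g j) (g (j + 1))) := by
      intro k
      induction k with
      | zero =>
        intro _
        refine ⟨fun _ => Vs, rfl, ?_, ?_⟩
        · intro j hj
          obtain rfl : j = 0 := Nat.le_zero.mp hj
          exact ⟨hVs, by rw [hf0]⟩
        · intro j hj
          exact absurd hj (Nat.not_lt_zero j)
      | succ k ih =>
        intro hk1
        obtain ⟨g, hg0, hgood, hsteps⟩ := ih (by omega)
        have hUk := hgood k (le_refl k)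
        have hstepk := hstep k (by omega)
        rw [hUk.2] at hstepk
        obtain ⟨W, hWsps, hWstep, hWenc⟩ :=
          backward_step hst hreach hUk.1 hstepk (hP (k + 1) (by omega))
        refine ⟨fun j => if j ≤ k then g j else W, by simp [hg0], ?_, ?_⟩
        · intro j hj
          by_cases hjk : j ≤ k
          · simpa [hjk] using hgood j hjk
          · obtain rfl : j = k + 1 := by omega
            simp only [if_neg hjk]
            exact ⟨hWsps, hWenc⟩
        · intro j hj
          by_cases hjk : j < k
          · have hh := hsteps j hjk
            simpa [show j ≤ k from by omega, show j + 1 ≤ k from by omega] using hh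
          · obtain rfl : j = k := by omega
            simpa [le_refl, show ¬(j + 1 ≤ j) from by omega] using hWstep
    obtain ⟨g, hg0, hgood, hsteps⟩ := key l (le_refl l)
    have hgl : g l = Vt := by
      have h1 := (hgood l (le_refl l)).2
      rw [hfl] at h1
      exact (encode_inj h1).symm
    exact ⟨l, g, hg0, hgl, fun k hk => (hgood k hk).1, hsteps⟩


end Stmt16
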